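/- In the memory-capacity-constrained reduction instance with M = 7, any feasible packing places each of the four layers with weight 6 in a singleton pack, and every layer of weight 2 is either alone or packed with exactly one adjacent layer of weight 4; no pack can contain two layers of weight 4. -/

import Mathlib

/-! **Statement 6.**
In the memory-capacity-constrained reduction instance with `M = 7` (layer
weights: `6` for layers `1, 2, 3n+3, 3n+4`; `4` for layers `3i` and `3i+2`;
`2` for layers `3i+1`), any feasible packing places each of the four layers
with weight 6 in a singleton pack, and every layer of weight 2 is either
alone or packed with exactly one adjacent layer of weight 4; no pack can
contain two layers of weight 4. -/

/-! Core model of the Harmony round-robin pipelined scheduling problem. -/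

namespace Harmony

/-- A layer is a pair `(processing time, weight size)`. -/
abbrev Layer := ℕ × ℕ

/-- A packing of the layer list `L` into contiguous packs is given by the list
of pack sizes `ss` (each positive, summing to the number of layers). -/
def validPacking (L : List Layer) (ss : List ℕ) : Prop :=
  (∀ s ∈ ss, 0 < s) ∧ ss.sum = L.length

/-- The `j`-th pack (0-indexed) of the packing of `L` described by sizes `ss`. -/
def pack (L : List Layer) (ss : List ℕ) (j : ℕ) : List Layer :=
  (L.drop ((ss.take j).sum)).take (ss.getD j 0)

/-- Processing time of the `j`-th pack (per microbatch). -/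
def packTime (L : List Layer) (ss : List ℕ) (j : ℕ) : ℕ :=
  ((pack L ss j).map Prod.fst).sum

/-- Total weight size of the `j`-th pack. -/
def packMem (L : List Layer) (ss : List ℕ) (j : ℕ) : ℕ :=
  ((pack L ss j).map Prod.snd).sum

/-- A packing is feasible if it is a valid packing and the weights of every
pack fit in GPU memory `M`. -/
def feasible (L : List Layer) (M : ℕ) (ss : List ℕ) : Prop :=
  validPacking L ss ∧ ∀ j < ss.length, packMem L ss j ≤ M

/-- Finish time of microbatch `b` (0-indexed) on pack `j` (0-indexed), for
round-robin assignment of packs to `G` GPUs with `B` microbatches and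
per-microbatch processing times `pt`.  Pack `j` runs on GPU `j % G`; each
pack processes its microbatches in order, and microbatch `b` of pack `j`
starts at the earliest time when its GPU is idle (i.e. after the previous
task scheduled on that GPU) and microbatch `b` is done on pack `j-1`. -/
def finish (pt : ℕ → ℕ) (G B : ℕ) (j b : ℕ) : ℕ :=
  -- time at which the GPU hosting pack `j` becomes idle
  let gpuIdle : ℕ :=
    if hb : b = 0 then
      if hj : G ≤ j ∧ 0 < G then finish pt G B (j - G) (B - 1) else 0
    else finish pt G B j (b - 1)
  -- time at which microbatch `b` is done on the previous pack
  let dep : ℕ := if hj0 : j = 0 then 0 else finish pt G B (j - 1) b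
  max gpuIdle dep + pt j
termination_by j * (B + 1) + b
decreasing_by
  · obtain ⟨h1, h2⟩ := hj
    have h3 : (j - G) * (B + 1) ≤ (j - 1) * (B + 1) :=
      Nat.mul_le_mul_right _ (by omega)
    have h4 : (j - 1) * (B + 1) = j * (B + 1) - (B + 1) := by
      rw [Nat.sub_one_mul]
    have h5 : 1 * (B + 1) ≤ j * (B + 1) := Nat.mul_le_mul_right _ (by omega)
    omega
  · omega
  · have h4 : (j - 1) * (B + 1) = j * (B + 1) - (B + 1) := by
      rw [Nat.sub_one_mul]
    have h5 : 1 * (B + 1) ≤ j * (B + 1) :=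
      Nat.mul_le_mul_right _ (Nat.one_le_iff_ne_zero.mpr hj0)
    omega

/-- Makespan of a packing: the finish time of the last microbatch on the
last pack. -/
def makespan (L : List Layer) (G B : ℕ) (ss : List ℕ) : ℕ :=
  finish (packTime L ss) G B (ss.length - 1) (B - 1)

end Harmony

namespace Harmony

/-! The reduction from Partition.  Given positive integers `a 1, …, a n`, the
reduction outputs the instance with `B = 3`, `G = 2`, `M = 7` and `3n + 4`
layers: layers `1, 2, 3n+3, 3n+4` have processing time `8A` and weight `6`;
for each `i = 1, …, n`, layers `3i` and `3i+2` have time `5A` and weight `4`,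
and layer `3i+1` has time `aᵢ` and weight `2`, where `A = 6·∑ᵢ aᵢ`.
(Layers are 1-indexed as in the paper; position `p` in the list is layer
`p + 1`.) -/

/-- The large processing-time quantity `A = 6·∑_{i=1}^n aᵢ`. -/
def bigA (a : ℕ → ℕ) (n : ℕ) : ℕ := 6 * ∑ i ∈ Finset.Icc 1 n, a i

/-- The list of layers `(time, weight)` output by the reduction. -/
def redLayers (a : ℕ → ℕ) (n : ℕ) : List Layer :=
  [(8 * bigA a n, 6), (8 * bigA a n, 6)]
    ++ (List.range n).flatMap
        (fun i => [(5 * bigA a n, 4), (a (i + 1), 2), (5 * bigA a n, 4)])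
    ++ [(8 * bigA a n, 6), (8 * bigA a n, 6)]

/-- Positions `p` and `q` (0-indexed) lie in the same pack of the packing
with sizes `ss`. -/
def samePack (ss : List ℕ) (p q : ℕ) : Prop :=
  ∃ j < ss.length,
    (ss.take j).sum ≤ p ∧ p < (ss.take (j + 1)).sum ∧
    (ss.take j).sum ≤ q ∧ q < (ss.take (j + 1)).sum

open scoped Classical in
/-- The subset `X = {i : layer 3i+1 is packed together with layer 3i}`
corresponding to a packing (layer `3i+1` is at position `3i`, layer `3i` at
position `3i - 1`). -/
noncomputable def XOf (ss : List ℕ) (n : ℕ) : Finset ℕ :=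
  (Finset.Icc 1 n).filter fun i => samePack ss (3 * i - 1) (3 * i)

/-- The target makespan
`T = (3·(32A + ∑_{i=1}^n (10A + aᵢ)) + 16A) / 2`. -/
def targetT (a : ℕ → ℕ) (n : ℕ) : ℕ :=
  (3 * (32 * bigA a n + ∑ i ∈ Finset.Icc 1 n, (10 * bigA a n + a i))
    + 16 * bigA a n) / 2

end Harmony

namespace Harmony

/-- No two consecutive weight-2 entries. -/
def R2 (x y : ℕ) : Prop := ¬(x = 2 ∧ y = 2)

lemma W_eq (a : ℕ → ℕ) (n : ℕ) :
    (redLayers a n).map Prod.snd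
      = [6, 6] ++ ((List.range n).flatMap fun _ => [4, 2, 4]) ++ [6, 6] := by
  simp [redLayers, List.map_flatMap]

lemma mem_W (a : ℕ → ℕ) (n : ℕ) (x : ℕ) (hx : x ∈ (redLayers a n).map Prod.snd) :
    x = 2 ∨ x = 4 ∨ x = 6 := by
  rw [W_eq] at hx
  simp [List.mem_flatMap] at hx
  rcases hx with h | ⟨_, _, h⟩ | h <;> tauto

lemma flatMap_chain (m : ℕ) (t : List ℕ) (ht : t.Chain' R2)
    (hh : ∀ h ∈ t.head?, h ≠ 2) :
    (((List.range m).flatMap fun _ => ([4, 2, 4] : List ℕ)) ++ t).Chain' R2 := by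
  induction m generalizing t with
  | zero => simpa using ht
  | succ m ih =>
      have he : (List.range (m + 1)).flatMap (fun _ => ([4, 2, 4] : List ℕ))
          = ((List.range m).flatMap fun _ => [4, 2, 4]) ++ [4, 2, 4] := by
        rw [List.range_succ, List.flatMap_append]; simp
      rw [he, List.append_assoc]
      refine ih ([4, 2, 4] ++ t) ?_ (by simp)
      show List.IsChain R2 (4 :: 2 :: 4 :: t)
      rw [List.isChain_cons_cons, List.isChain_cons_cons]
      exact ⟨by simp [R2], by simp [R2],
        List.isChain_cons.mpr ⟨fun y _ => by simp [R2], ht⟩⟩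

lemma chain_W (a : ℕ → ℕ) (n : ℕ) :
    ((redLayers a n).map Prod.snd).Chain' R2 := by
  rw [W_eq]
  show List.IsChain R2 (6 :: 6 :: (((List.range n).flatMap fun _ => [4, 2, 4]) ++ [6, 6]))
  rw [List.isChain_cons_cons]
  refine ⟨by simp [R2], List.isChain_cons.mpr ⟨fun y _ => by simp [R2], ?_⟩⟩
  exact flatMap_chain n [6, 6] (by simp [R2, List.Chain']) (by simp)

lemma two_mul_length_le (P : List ℕ) (h : ∀ x ∈ P, 2 ≤ x) :
    2 * P.length ≤ P.sum := by
  induction P with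
  | nil => simp
  | cons x t ih =>
      have hx := h x (by simp)
      have := ih fun y hy => h y (by simp [hy])
      simp only [List.length_cons, List.sum_cons]
      omega

lemma six_lemma (P : List ℕ) (hge2 : ∀ x ∈ P, 2 ≤ x) (h7 : P.sum ≤ 7)
    (h6 : 6 ∈ P) : P.length = 1 := by
  obtain ⟨s, t, rfl⟩ := List.append_of_mem h6
  have hs := two_mul_length_le s fun x hx => hge2 x (by simp [hx])
  have ht := two_mul_length_le t fun x hx => hge2 x (by simp [hx])
  simp only [List.sum_append, List.sum_cons, List.length_append, List.length_cons] at h7 ⊢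
  omega

lemma count4_bound (P : List ℕ) (h : ∀ x ∈ P, 2 ≤ x) :
    2 * P.length + 2 * P.count 4 ≤ P.sum := by
  induction P with
  | nil => simp
  | cons x t ih =>
      have hx := h x (by simp)
      have := ih fun y hy => h y (by simp [hy])
      by_cases hx4 : x = 4 <;>
        simp [List.count_cons, hx4] <;> omega

lemma count4_lemma (P : List ℕ) (hge2 : ∀ x ∈ P, 2 ≤ x) (h7 : P.sum ≤ 7) :
    P.count 4 ≤ 1 := by
  have h1 := count4_bound P hge2
  have h2 : P.count 4 ≤ P.length := List.count_le_length
  omega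

lemma weight2_lemma (P : List ℕ) (hvals : ∀ x ∈ P, x = 2 ∨ x = 4 ∨ x = 6)
    (hch : P.Chain' R2) (h7 : P.sum ≤ 7) (h2 : 2 ∈ P) :
    P.length ≤ 2 ∧ (P.length = 2 → 4 ∈ P) := by
  match P with
  | [] => simp at h2
  | [x] => exact ⟨by simp, by simp⟩
  | [x, y] =>
      refine ⟨by simp, fun _ => ?_⟩
      have hx := hvals x (by simp)
      have hy := hvals y (by simp)
      have hr : R2 x y := (List.isChain_cons_cons.mp hch).1
      simp only [R2] at hr
      simp only [List.sum_cons, List.sum_nil] at h7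
      simp only [List.mem_cons, List.not_mem_nil, or_false] at h2 ⊢
      omega
  | x :: y :: z :: t =>
      exfalso
      have hx := hvals x (by simp)
      have hy := hvals y (by simp)
      have hz := hvals z (by simp)
      have hr : R2 x y := (List.isChain_cons_cons.mp hch).1
      simp only [R2] at hr
      simp only [List.sum_cons] at h7
      omega

theorem reduction_pack_structure (a : ℕ → ℕ) (n : ℕ) (ss : List ℕ)
    (hfeas : feasible (redLayers a n) 7 ss) (j : ℕ) (hj : j < ss.length) :
    -- a pack containing a weight-6 layer is a singleton
    ((6 : ℕ) ∈ (pack (redLayers a n) ss j).map Prod.snd →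
      (pack (redLayers a n) ss j).length = 1) ∧
    -- no pack contains two layers of weight 4
    ((pack (redLayers a n) ss j).map Prod.snd).count 4 ≤ 1 ∧
    -- a weight-2 layer is alone or packed with exactly one (adjacent) weight-4 layer
    ((2 : ℕ) ∈ (pack (redLayers a n) ss j).map Prod.snd →
      (pack (redLayers a n) ss j).length ≤ 2 ∧
      ((pack (redLayers a n) ss j).length = 2 →
        (4 : ℕ) ∈ (pack (redLayers a n) ss j).map Prod.snd)) := by
  obtain ⟨⟨hpos, hsumss⟩, hmemM⟩ := hfeas
  set W := (redLayers a n).map Prod.snd with hW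
  set P := (pack (redLayers a n) ss j).map Prod.snd with hPdef
  have hP : P = (W.drop ((ss.take j).sum)).take (ss.getD j 0) := by
    simp [hPdef, pack, hW, List.map_take, List.map_drop]
  have hlen : (pack (redLayers a n) ss j).length = P.length := by
    simp [hPdef]
  have hsum7 : P.sum ≤ 7 := hmemM j hj
  have hinf : P <:+: W := by
    rw [hP]
    exact (List.take_prefix _ _).isInfix.trans (List.drop_suffix _ _).isInfix
  have hvals : ∀ x ∈ P, x = 2 ∨ x = 4 ∨ x = 6 :=
    fun x hx => mem_W a n x (hinf.subset hx)
  have hge2 : ∀ x ∈ P, 2 ≤ x := by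
    intro x hx; rcases hvals x hx with h | h | h <;> omega
  have hchain : P.Chain' R2 := by
    rw [hP]; exact ((chain_W a n).drop _).take _
  refine ⟨?_, count4_lemma P hge2 hsum7, ?_⟩
  · intro h6
    rw [hlen]
    exact six_lemma P hge2 hsum7 h6
  · intro h2
    have := weight2_lemma P hvals hchain hsum7 h2
    rw [hlen]
    exact this

end Harmony
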